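/- Let (Ω,𝓕) be a measurable space, μ̄ a probability measure on (Ω,𝓕), ν_1,…,ν_{m'} probability measures on (Ω,𝓕), and b_1,…,b_{m'} ≥ 0 with Σ_j b_j = 1. For each ℓ let ν_ℓ = λ_ℓ + ρ_ℓ be the Lebesgue decomposition of ν_ℓ with respect to μ̄, i.e. λ_ℓ ⊥ μ̄ and ρ_ℓ ≪ μ̄. Then for each ℓ, b_ℓ · λ_ℓ(Ω) ≤ ‖μ̄ − Σ_{j=1}^{m'} b_j ν_j‖, where ‖·‖ denotes the total variation norm on finite signed measures. In particular, if 𝒫_i = Σ_{j} b_j δ_{ν_{i,j}} is a sequence with ‖μ̄ − Σ_j b_j ν_{i,j}‖ → 0 and b_ℓ > 0, then the singular parts λ_{i,ℓ} of ν_{i,ℓ} with respect to μ̄ satisfy ‖λ_{i,ℓ}‖ → 0. -/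

import Mathlib

open MeasureTheory Filter
open scoped ENNReal

noncomputable section

/-- The total variation norm `‖μ - ν‖` of the difference of two (finite) measures. -/
def tvDist {Ω : Type*} [MeasurableSpace Ω] (μ ν : Measure Ω) : ℝ≥0∞ :=
  (μ - ν) Set.univ + (ν - μ) Set.univ

lemma key_lemma {Ω : Type*} [MeasurableSpace Ω]
    (μbar : Measure Ω) {m' : ℕ} (b : Fin m' → ℝ)
    (ν lam rho : Fin m' → Measure Ω)
    (hdec : ∀ l, ν l = lam l + rho l ∧ (lam l).MutuallySingular μbar ∧ rho l ≪ μbar)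
    (l : Fin m') :
    ENNReal.ofReal (b l) * lam l Set.univ ≤
      tvDist μbar (∑ j, ENNReal.ofReal (b j) • ν j) := by
  obtain ⟨hsum, hsing, hac⟩ := hdec l
  obtain ⟨s, hs, hls, hμs⟩ := hsing
  set νbar : Measure Ω := ∑ j, ENNReal.ofReal (b j) • ν j with hνbar
  -- λ_l univ ≤ λ_l sᶜ
  have h1 : lam l Set.univ ≤ lam l sᶜ := by
    calc lam l Set.univ ≤ lam l (s ∪ sᶜ) := by rw [Set.union_compl_self]
    _ ≤ lam l s + lam l sᶜ := measure_union_le _ _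
    _ = lam l sᶜ := by rw [hls, zero_add]
  have h2 : ENNReal.ofReal (b l) * lam l sᶜ ≤ νbar sᶜ := by
    have : ENNReal.ofReal (b l) * ν l sᶜ ≤ νbar sᶜ := by
      rw [hνbar]
      simp only [Measure.coe_finset_sum, Finset.sum_apply, Measure.smul_apply,
        smul_eq_mul]
      exact Finset.single_le_sum (f := fun j => ENNReal.ofReal (b j) * ν j sᶜ)
        (fun j _ => zero_le) (Finset.mem_univ l)
    refine le_trans ?_ this
    gcongr
    have : lam l ≤ ν l := hsum ▸ Measure.le_add_right le_rfl
    exact this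
  have h3 : νbar sᶜ = (νbar - μbar) sᶜ := by
    have hres := Measure.restrict_sub_eq_restrict_sub_restrict (μ := νbar) (ν := μbar) hs.compl
    have hr : μbar.restrict sᶜ = 0 := Measure.restrict_eq_zero.mpr hμs
    have sub0 : νbar.restrict sᶜ - 0 = νbar.restrict sᶜ :=
      le_antisymm Measure.sub_le (le_sInf fun d hd => by simpa using hd)
    calc νbar sᶜ = (νbar.restrict sᶜ) Set.univ := by rw [Measure.restrict_apply_univ]
    _ = ((νbar - μbar).restrict sᶜ) Set.univ := by rw [hres, hr, sub0]
    _ = (νbar - μbar) sᶜ := by rw [Measure.restrict_apply_univ]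
  calc ENNReal.ofReal (b l) * lam l Set.univ
      ≤ ENNReal.ofReal (b l) * lam l sᶜ := by gcongr
    _ ≤ νbar sᶜ := h2
    _ = (νbar - μbar) sᶜ := h3
    _ ≤ (νbar - μbar) Set.univ := measure_mono (Set.subset_univ _)
    _ ≤ tvDist μbar νbar := le_add_self

/-- the singular parts of mixture components are controlled by the total
variation distance of the mixture to `μ̄`: `b_ℓ · λ_ℓ(Ω) ≤ ‖μ̄ − Σ_j b_j ν_j‖`; in
particular, if `‖μ̄ − Σ_j b_j ν_{i,j}‖ → 0` and `b_ℓ > 0`, then `‖λ_{i,ℓ}‖ → 0`. -/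
theorem singular_part_le_tvDist {Ω : Type*} [MeasurableSpace Ω]
    (μbar : Measure Ω) [IsProbabilityMeasure μbar] {m' : ℕ}
    (b : Fin m' → ℝ) (hb0 : ∀ j, 0 ≤ b j) (hb1 : ∑ j, b j = 1) :
    (∀ (ν lam rho : Fin m' → Measure Ω),
      (∀ j, IsProbabilityMeasure (ν j)) →
      (∀ l, ν l = lam l + rho l ∧ (lam l).MutuallySingular μbar ∧ rho l ≪ μbar) →
      ∀ l : Fin m',
        ENNReal.ofReal (b l) * lam l Set.univ ≤
          tvDist μbar (∑ j, ENNReal.ofReal (b j) • ν j)) ∧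
    (∀ (ν lam rho : ℕ → Fin m' → Measure Ω),
      (∀ i j, IsProbabilityMeasure (ν i j)) →
      (∀ i l, ν i l = lam i l + rho i l ∧ (lam i l).MutuallySingular μbar ∧
        rho i l ≪ μbar) →
      Filter.Tendsto (fun i : ℕ => tvDist μbar (∑ j, ENNReal.ofReal (b j) • ν i j))
        Filter.atTop (nhds 0) →
      ∀ l : Fin m', 0 < b l →
        Filter.Tendsto (fun i : ℕ => lam i l Set.univ) Filter.atTop (nhds 0)) := by
  constructor
  · intro ν lam rho _ hdec l
    exact key_lemma μbar b ν lam rho hdec l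
  · intro ν lam rho _ hdec htv l hbl
    have hne : ENNReal.ofReal (b l) ≠ 0 := (ENNReal.ofReal_pos.mpr hbl).ne'
    have hc : (ENNReal.ofReal (b l))⁻¹ ≠ ∞ := ENNReal.inv_ne_top.mpr hne
    have hmul : Tendsto
        (fun i : ℕ => (ENNReal.ofReal (b l))⁻¹ *
          tvDist μbar (∑ j, ENNReal.ofReal (b j) • ν i j)) atTop (nhds 0) := by
      have := ENNReal.Tendsto.const_mul (a := (ENNReal.ofReal (b l))⁻¹) htv
        (Or.inr hc)
      simpa using this
    refine tendsto_of_tendsto_of_tendsto_of_le_of_le tendsto_const_nhds hmul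
      (fun i => zero_le) ?_
    intro i
    have h := key_lemma μbar b (ν i) (lam i) (rho i) (hdec i) l
    rw [mul_comm, ← ENNReal.le_div_iff_mul_le (Or.inl hne)
      (Or.inl ENNReal.ofReal_ne_top)] at h
    rwa [ENNReal.div_eq_inv_mul] at h
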